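/- Let V, W₁, W₂ be finite-dimensional real inner product spaces, c, c̃ ∈ ℝ, and let A be a symmetric endomorphism of V with k = dim V distinct eigenvalues α₁,…,α_k and corresponding orthonormal eigenvectors a₁,…,a_k. Let ψ : V → ℝ be linear and ν : V → W₁, β : V → W₂ linear maps. Then the system (⋆) { X + Xᵗ = νᵗν + βᵗβ + c̃·ψᵗψ ; X∘A + Aᵗ∘Xᵗ = βᵗβ − (c−c̃)·ψᵗψ } admits a solution X ∈ End(V) if and only if (1−α_i)‖β(a_i)‖² − α_i‖ν(a_i)‖² − ((c−c̃) + α_i c̃)·ψ(a_i)² = 0 for every i = 1,…,k. Moreover, if these equations hold, the solution X is unique and is given by ⟨X a_i, a_i⟩ = G_{ii}/2 and, for i ≠ j, ⟨X a_i, a_j⟩ = (ρ_{ij} − α_j G_{ij})/(α_i − α_j), where ρ_{ij} = ⟨β(a_i), β(a_j)⟩ − (c−c̃)ψ(a_i)ψ(a_j) and G_{ij} = ⟨ν(a_i), ν(a_j)⟩ + ⟨β(a_i), β(a_j)⟩ + c̃·ψ(a_i)ψ(a_j). -/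

import Mathlib

open scoped RealInnerProductSpace

variable {V W₁ W₂ : Type*}

/-- `νᵗν`, the symmetric endomorphism associated to a linear map `ν`. -/
noncomputable def gram [NormedAddCommGroup V] [InnerProductSpace ℝ V] [FiniteDimensional ℝ V]
    [NormedAddCommGroup W₁] [InnerProductSpace ℝ W₁] [FiniteDimensional ℝ W₁]
    (ν : V →ₗ[ℝ] W₁) : Module.End ℝ V :=
  LinearMap.adjoint ν ∘ₗ ν

/-- The system (⋆): `X + Xᵗ = νᵗν + βᵗβ + c̃·ψᵗψ` and
`X∘A + Aᵗ∘Xᵗ = βᵗβ − (c−c̃)·ψᵗψ`. -/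
noncomputable def SolvesSys [NormedAddCommGroup V] [InnerProductSpace ℝ V] [FiniteDimensional ℝ V]
    [NormedAddCommGroup W₁] [InnerProductSpace ℝ W₁] [FiniteDimensional ℝ W₁]
    [NormedAddCommGroup W₂] [InnerProductSpace ℝ W₂] [FiniteDimensional ℝ W₂]
    (c ct : ℝ) (A : Module.End ℝ V)
    (ψ : V →ₗ[ℝ] ℝ) (ν : V →ₗ[ℝ] W₁) (β : V →ₗ[ℝ] W₂) (X : Module.End ℝ V) : Prop :=
  X + LinearMap.adjoint X = gram ν + gram β + ct • gram ψ ∧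
  X * A + LinearMap.adjoint A * LinearMap.adjoint X = gram β - (c - ct) • gram ψ

theorem gram_inner [NormedAddCommGroup V] [InnerProductSpace ℝ V] [FiniteDimensional ℝ V]
    [NormedAddCommGroup W₁] [InnerProductSpace ℝ W₁] [FiniteDimensional ℝ W₁]
    (ν : V →ₗ[ℝ] W₁) (u w : V) : ⟪gram ν u, w⟫ = ⟪ν u, ν w⟫ := by
  simp [gram, LinearMap.adjoint_inner_left]

/-- the candidate matrix of the solution -/
noncomputable def xmat {ι : Type*} [DecidableEq ι] (α : ι → ℝ) (ρ G : ι → ι → ℝ) (i j : ι) : ℝ :=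
  if i = j then G i i / 2 else (ρ i j - α j * G i j) / (α i - α j)

theorem xmat_diag {ι : Type*} [DecidableEq ι] (α : ι → ℝ) (ρ G : ι → ι → ℝ) (i : ι) :
    xmat α ρ G i i = G i i / 2 := if_pos rfl

theorem xmat_ne {ι : Type*} [DecidableEq ι] (α : ι → ℝ) (ρ G : ι → ι → ℝ) {i j : ι} (h : i ≠ j) :
    xmat α ρ G i j = (ρ i j - α j * G i j) / (α i - α j) := if_neg h

/-- for a symmetric `A` with `k = dim V` distinct eigenvalues `αᵢ` and
orthonormal eigenvectors `aᵢ`, the system (⋆) has a solution iff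
`(1−αᵢ)‖β(aᵢ)‖² − αᵢ‖ν(aᵢ)‖² − ((c−c̃) + αᵢc̃)·ψ(aᵢ)² = 0` for all `i`; in that case the
solution is unique and is given by `⟨Xaᵢ, aᵢ⟩ = Gᵢᵢ/2` and
`⟨Xaᵢ, aⱼ⟩ = (ρᵢⱼ − αⱼGᵢⱼ)/(αᵢ − αⱼ)` for `i ≠ j`. -/
theorem stmt_4 [NormedAddCommGroup V] [InnerProductSpace ℝ V] [FiniteDimensional ℝ V]
    [NormedAddCommGroup W₁] [InnerProductSpace ℝ W₁] [FiniteDimensional ℝ W₁]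
    [NormedAddCommGroup W₂] [InnerProductSpace ℝ W₂] [FiniteDimensional ℝ W₂]
    (c ct : ℝ) (A : Module.End ℝ V)
    (hsym : LinearMap.adjoint (A : V →ₗ[ℝ] V) = A)
    (α : Fin (Module.finrank ℝ V) → ℝ) (hinj : Function.Injective α)
    (a : Fin (Module.finrank ℝ V) → V) (hON : Orthonormal ℝ a)
    (heig : ∀ i, A (a i) = α i • a i)
    (ψ : V →ₗ[ℝ] ℝ) (ν : V →ₗ[ℝ] W₁) (β : V →ₗ[ℝ] W₂)
    (ρ G : Fin (Module.finrank ℝ V) → Fin (Module.finrank ℝ V) → ℝ)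
    (hρ : ∀ i j, ρ i j = ⟪β (a i), β (a j)⟫ - (c - ct) * (ψ (a i) * ψ (a j)))
    (hG : ∀ i j, G i j = ⟪ν (a i), ν (a j)⟫ + ⟪β (a i), β (a j)⟫ + ct * (ψ (a i) * ψ (a j))) :
    ((∃ X : Module.End ℝ V, SolvesSys c ct A ψ ν β X) ↔
      ∀ i, (1 - α i) * ‖β (a i)‖ ^ 2 - α i * ‖ν (a i)‖ ^ 2
          - ((c - ct) + α i * ct) * ψ (a i) ^ 2 = 0) ∧
    ((∀ i, (1 - α i) * ‖β (a i)‖ ^ 2 - α i * ‖ν (a i)‖ ^ 2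
          - ((c - ct) + α i * ct) * ψ (a i) ^ 2 = 0) →
      (∃! X : Module.End ℝ V, SolvesSys c ct A ψ ν β X) ∧
      ∀ X : Module.End ℝ V, SolvesSys c ct A ψ ν β X →
        (∀ i, ⟪X (a i), a i⟫ = G i i / 2) ∧
        ∀ i j, i ≠ j → ⟪X (a i), a j⟫ = (ρ i j - α j * G i j) / (α i - α j)) := by
  classical
  -- basis machinery
  let b : Module.Basis (Fin (Module.finrank ℝ V)) ℝ V :=
    Module.Basis.mk hON.linearIndependent
      (hON.linearIndependent.span_eq_top_of_card_eq_finrank' (by simp)).ge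
  have hb : ⇑b = a := Module.Basis.coe_mk _ _
  have hONb : Orthonormal ℝ ⇑b := by rwa [hb]
  let ob : OrthonormalBasis (Fin (Module.finrank ℝ V)) ℝ V := b.toOrthonormalBasis hONb
  have hob : ⇑ob = a := by rw [Module.Basis.coe_toOrthonormalBasis, hb]
  have hvec : ∀ x y : V, (∀ j, ⟪x, a j⟫ = ⟪y, a j⟫) → x = y := by
    intro x y h
    apply ob.repr.injective
    ext j
    rw [ob.repr_apply_apply, ob.repr_apply_apply, hob, real_inner_comm, h, real_inner_comm]
  have hext : ∀ T S : Module.End ℝ V, (∀ i j, ⟪T (a i), a j⟫ = ⟪S (a i), a j⟫) → T = S := by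
    intro T S h
    apply b.ext
    intro i
    rw [show b i = a i from congrFun hb i]
    exact hvec _ _ (h i)
  have hortho : ∀ i j, ⟪a i, a j⟫ = if i = j then (1:ℝ) else 0 := orthonormal_iff_ite.mp hON
  have hpsi : ∀ i j : Fin (Module.finrank ℝ V), ⟪ψ (a i), ψ (a j)⟫ = ψ (a i) * ψ (a j) := by
    intro i j; simp [RCLike.inner_apply]; ring
  -- RHS entries
  have hRHS1 : ∀ i j, ⟪(gram ν + gram β + ct • gram ψ) (a i), a j⟫ = G i j := by
    intro i j
    simp only [LinearMap.add_apply, LinearMap.smul_apply, inner_add_left, real_inner_smul_left,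
      gram_inner, hpsi, hG i j]
  have hRHS2 : ∀ i j, ⟪(gram β - (c - ct) • gram ψ) (a i), a j⟫ = ρ i j := by
    intro i j
    simp only [LinearMap.sub_apply, LinearMap.smul_apply, inner_sub_left, real_inner_smul_left,
      gram_inner, hpsi, hρ i j]
  -- key characterization
  have key : ∀ X : Module.End ℝ V, SolvesSys c ct A ψ ν β X ↔
      ∀ i j, (⟪X (a i), a j⟫ + ⟪X (a j), a i⟫ = G i j ∧
              α i * ⟪X (a i), a j⟫ + α j * ⟪X (a j), a i⟫ = ρ i j) := by
    intro X
    constructor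
    · rintro ⟨h1, h2⟩ i j
      refine ⟨?_, ?_⟩
      · have e1 : ⟪(X + LinearMap.adjoint X) (a i), a j⟫ = G i j := by
          rw [h1]; exact hRHS1 i j
        simp only [LinearMap.add_apply, inner_add_left, LinearMap.adjoint_inner_left] at e1
        rwa [show (⟪a i, X (a j)⟫:ℝ) = ⟪X (a j), a i⟫ from real_inner_comm _ _] at e1
      · have e2 : ⟪(X * A + LinearMap.adjoint A * LinearMap.adjoint X) (a i), a j⟫ = ρ i j := by
          rw [h2]; exact hRHS2 i j
        simp only [LinearMap.add_apply, Module.End.mul_apply, inner_add_left,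
          LinearMap.adjoint_inner_left, heig, map_smul, real_inner_smul_left,
          real_inner_smul_right] at e2
        rwa [show (⟪a i, X (a j)⟫:ℝ) = ⟪X (a j), a i⟫ from real_inner_comm _ _] at e2
    · intro h
      constructor
      · apply hext
        intro i j
        rw [hRHS1 i j]
        simp only [LinearMap.add_apply, inner_add_left, LinearMap.adjoint_inner_left]
        rw [show (⟪a i, X (a j)⟫:ℝ) = ⟪X (a j), a i⟫ from real_inner_comm _ _]
        exact (h i j).1
      · apply hext
        intro i j
        rw [hRHS2 i j]
        simp only [LinearMap.add_apply, Module.End.mul_apply, inner_add_left,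
          LinearMap.adjoint_inner_left, heig, map_smul, real_inner_smul_left,
          real_inner_smul_right]
        rw [show (⟪a i, X (a j)⟫:ℝ) = ⟪X (a j), a i⟫ from real_inner_comm _ _]
        exact (h i j).2
  -- symmetry of G and ρ
  have hGsymm : ∀ i j, G j i = G i j := by
    intro i j
    rw [hG j i, hG i j, real_inner_comm (ν (a j)) (ν (a i)), real_inner_comm (β (a j)) (β (a i))]
    ring
  have hρsymm : ∀ i j, ρ j i = ρ i j := by
    intro i j
    rw [hρ j i, hρ i j, real_inner_comm (β (a j)) (β (a i))]
    ring
  -- the condition at index i is equivalent to ρ i i = α i * G i i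
  have hcond_iff : ∀ i, ((1 - α i) * ‖β (a i)‖ ^ 2 - α i * ‖ν (a i)‖ ^ 2
      - ((c - ct) + α i * ct) * ψ (a i) ^ 2 = 0) ↔ ρ i i = α i * G i i := by
    intro i
    rw [hρ i i, hG i i, real_inner_self_eq_norm_sq, real_inner_self_eq_norm_sq]
    constructor <;> intro h <;> linear_combination h
  -- any solution has the prescribed entries
  have hformula : ∀ X : Module.End ℝ V, SolvesSys c ct A ψ ν β X →
      ∀ i j, ⟪X (a i), a j⟫ = xmat α ρ G i j := by
    intro X hX i j
    have h := (key X).mp hX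
    by_cases hij : i = j
    · subst hij
      have e1 := (h i i).1
      rw [xmat_diag]
      linarith
    · have hα : α i - α j ≠ 0 := sub_ne_zero.mpr fun he => hij (hinj he)
      have e1 := (h i j).1
      have e2 := (h i j).2
      rw [xmat_ne α ρ G hij]
      field_simp
      linear_combination e2 - α j * e1
  -- the candidate solution
  let X0 : Module.End ℝ V := b.constr ℝ (fun i => ∑ k, xmat α ρ G i k • a k)
  have hX0ai : ∀ i, X0 (a i) = ∑ k, xmat α ρ G i k • a k := by
    intro i
    rw [← congrFun hb i]
    exact b.constr_basis ℝ _ i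
  have hX0entry : ∀ i j, ⟪X0 (a i), a j⟫ = xmat α ρ G i j := by
    intro i j
    rw [hX0ai i, sum_inner]
    simp [real_inner_smul_left, hortho, mul_ite]
  -- X0 solves the system under the condition
  have hX0solves : (∀ i, (1 - α i) * ‖β (a i)‖ ^ 2 - α i * ‖ν (a i)‖ ^ 2
      - ((c - ct) + α i * ct) * ψ (a i) ^ 2 = 0) → SolvesSys c ct A ψ ν β X0 := by
    intro hcond
    rw [key X0]
    intro i j
    rw [hX0entry i j, hX0entry j i]
    by_cases hij : i = j
    · subst hij
      have hc := (hcond_iff i).mp (hcond i)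
      rw [xmat_diag]
      constructor
      · ring
      · linarith
    · have hji : j ≠ i := fun h => hij h.symm
      have hα : α i - α j ≠ 0 := sub_ne_zero.mpr fun he => hij (hinj he)
      have hα' : α j - α i ≠ 0 := sub_ne_zero.mpr fun he => hji (hinj he)
      rw [xmat_ne α ρ G hij, xmat_ne α ρ G hji, hρsymm i j, hGsymm i j]
      constructor
      · field_simp
        ring
      · field_simp
        ring
  constructor
  · constructor
    · rintro ⟨X, hX⟩ i
      have h := (key X).mp hX
      have e1 := (h i i).1
      have e2 := (h i i).2
      rw [hcond_iff i]
      linear_combination α i * e1 - e2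
    · intro hcond
      exact ⟨X0, hX0solves hcond⟩
  · intro hcond
    have hsol := hX0solves hcond
    refine ⟨⟨X0, hsol, ?_⟩, ?_⟩
    · intro Y hY
      apply hext
      intro i j
      rw [hformula Y hY i j, hX0entry i j]
    · intro X hX
      constructor
      · intro i
        have := hformula X hX i i
        rwa [xmat_diag] at this
      · intro i j hij
        have := hformula X hX i j
        rwa [xmat_ne α ρ G hij] at this
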